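/- arXiv:2410.02822 — 3 statements merged into one kernel-verified Lean document; each statement's English description precedes it below -/
import Mathlib

section
/- Let K : [0,1]² → ℝ be bounded, and for each ε > 0 assume there is an open set A_ε ⊆ [0,1]² on which K is uniformly continuous and such that, setting B^u_ε = {v : (u,v) ∈ A_ε}, one has λ((B^u_ε)^c) ≤ ε for all u. Define K̃^N(u,v) := K(⌊Nu⌋/N, ⌊Nv⌋/N). Then ∫₀¹∫₀¹ |K̃^N(u,v) − K(u,v)| dv du → 0 as N → ∞; in particular ‖K̃^N − K‖_{∞→1} → 0. -/
open MeasureTheory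

private lemma floor_aux {N : ℕ} (hN : 1 ≤ N) {u : ℝ} (hu : u ∈ Set.Icc (0:ℝ) 1) :
    (⌊(N:ℝ)*u⌋ : ℝ)/N ∈ Set.Icc (0:ℝ) 1 ∧ dist ((⌊(N:ℝ)*u⌋:ℝ)/N) u ≤ 1/N := by
  have hN0 : (0:ℝ) < N := by exact_mod_cast hN
  obtain ⟨hu0, hu1⟩ := hu
  have h1 : (⌊(N:ℝ)*u⌋ : ℝ) ≤ (N:ℝ)*u := Int.floor_le _
  have h2 : (N:ℝ)*u < (⌊(N:ℝ)*u⌋:ℝ) + 1 := Int.lt_floor_add_one _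
  have h3 : (0:ℝ) ≤ (⌊(N:ℝ)*u⌋:ℝ) := by
    exact_mod_cast Int.floor_nonneg.2 (by positivity)
  have hle : (⌊(N:ℝ)*u⌋:ℝ)/N ≤ u := by
    rw [div_le_iff₀ hN0]; nlinarith
  refine ⟨⟨by positivity, ?_⟩, ?_⟩
  · rw [div_le_one hN0]; nlinarith
  · rw [Real.dist_eq, abs_sub_comm, abs_of_nonneg (by linarith)]
    rw [sub_le_iff_le_add, ← add_div, le_div_iff₀ hN0]
    nlinarith

set_option maxHeartbeats 2000000 in
theorem stmt8 (K : ℝ → ℝ → ℝ) (CK : ℝ)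
    (hbound : ∀ u v, |K u v| ≤ CK)
    (hmeas : Measurable fun p : ℝ × ℝ => K p.1 p.2)
    (hcond : ∀ ε > (0 : ℝ), ∃ A : Set (ℝ × ℝ),
      (∃ U : Set (ℝ × ℝ), IsOpen U ∧ A = U ∩ (Set.Icc 0 1 ×ˢ Set.Icc 0 1)) ∧
      UniformContinuousOn (fun p : ℝ × ℝ => K p.1 p.2) A ∧
      ∀ u ∈ Set.Icc (0 : ℝ) 1,
        volume {v ∈ Set.Icc (0 : ℝ) 1 | (u, v) ∉ A} ≤ ENNReal.ofReal ε) :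
    Filter.Tendsto (fun N : ℕ =>
        ∫ u in Set.Icc (0 : ℝ) 1, ∫ v in Set.Icc (0 : ℝ) 1,
          |K ((⌊(N : ℝ) * u⌋ : ℝ) / N) ((⌊(N : ℝ) * v⌋ : ℝ) / N) - K u v|)
      Filter.atTop (nhds 0) := by
  have hCK : (0:ℝ) ≤ CK := le_trans (abs_nonneg _) (hbound 0 0)
  set Q : Set (ℝ × ℝ) := Set.Icc (0:ℝ) 1 ×ˢ Set.Icc (0:ℝ) 1 with hQ
  have hQmeas : MeasurableSet Q := measurableSet_Icc.prod measurableSet_Icc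
  have hQvol : volume Q = 1 := by
    rw [hQ, Measure.volume_eq_prod, Measure.prod_prod, Real.volume_Icc]
    norm_num
  have hQfin : volume Q < ⊤ := by rw [hQvol]; exact ENNReal.one_lt_top
  haveI hfinQ : IsFiniteMeasure (volume.restrict Q) :=
    ⟨by rw [Measure.restrict_apply_univ, hQvol]; exact ENNReal.one_lt_top⟩
  set g : ℕ → ℝ × ℝ → ℝ :=
    fun N p => |K ((⌊(N:ℝ)*p.1⌋:ℝ)/N) ((⌊(N:ℝ)*p.2⌋:ℝ)/N) - K p.1 p.2| with hgdef
  have hgmeas : ∀ N : ℕ, Measurable (g N) := by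
    intro N
    have h1 : Measurable fun p : ℝ × ℝ => ((⌊(N:ℝ)*p.1⌋:ℝ)/(N:ℝ), (⌊(N:ℝ)*p.2⌋:ℝ)/(N:ℝ)) := by
      refine Measurable.prod ?_ ?_ <;>
        exact (measurable_from_top.comp ((measurable_const.mul (by measurability)).floor)).div_const _
    exact ((hmeas.comp h1).sub hmeas).abs
  have hgbound : ∀ N p, g N p ≤ 2*CK := by
    intro N p
    calc g N p ≤ |K ((⌊(N:ℝ)*p.1⌋:ℝ)/N) ((⌊(N:ℝ)*p.2⌋:ℝ)/N)| + |K p.1 p.2| := abs_sub _ _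
      _ ≤ 2*CK := by linarith [hbound ((⌊(N:ℝ)*p.1⌋:ℝ)/N) ((⌊(N:ℝ)*p.2⌋:ℝ)/N), hbound p.1 p.2]
  have hgint : ∀ N, IntegrableOn (g N) Q := by
    intro N
    refine ⟨(hgmeas N).aestronglyMeasurable, HasFiniteIntegral.of_bounded (C := 2*CK)
      (ae_of_all _ fun p => ?_)⟩
    rw [Real.norm_eq_abs, abs_abs]; exact hgbound N p
  have hiter : ∀ N : ℕ,
      (∫ u in Set.Icc (0:ℝ) 1, ∫ v in Set.Icc (0:ℝ) 1,
        |K ((⌊(N:ℝ)*u⌋:ℝ)/N) ((⌊(N:ℝ)*v⌋:ℝ)/N) - K u v|) = ∫ p in Q, g N p := by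
    intro N
    have h := setIntegral_prod (μ := volume) (ν := volume) (g N)
      (s := Set.Icc (0:ℝ) 1) (t := Set.Icc (0:ℝ) 1)
      (by rw [← Measure.volume_eq_prod]; exact hgint N)
    rw [← Measure.volume_eq_prod] at h
    exact h.symm
  have hFnonneg : ∀ N : ℕ, 0 ≤ ∫ p in Q, g N p :=
    fun N => setIntegral_nonneg hQmeas fun p _ => abs_nonneg _
  rw [Metric.tendsto_atTop]
  intro ε hε
  set ε₁ : ℝ := ε / (4*(2*CK+1)) with hε₁def
  have hε₁ : 0 < ε₁ := by positivity
  obtain ⟨A, ⟨U, hUopen, hAU⟩, hunif, hsec⟩ := hcond ε₁ hε₁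
  obtain ⟨δ, hδpos, hδ⟩ := Metric.uniformContinuousOn_iff.1 hunif ε₁ hε₁
  have hAQ : A ⊆ Q := by rw [hAU]; exact Set.inter_subset_right
  have hAsubU : A ⊆ U := by rw [hAU]; exact Set.inter_subset_left
  have hAmeas : MeasurableSet A := by
    rw [hAU]; exact hUopen.measurableSet.inter hQmeas
  -- bad-ball sets
  set W : ℝ → Set (ℝ × ℝ) := fun r => {p | ¬ Metric.ball p r ⊆ U} with hWdef
  have hWopen : ∀ r, IsOpen (W r) := by
    intro r
    have : W r = ⋃ q ∈ Uᶜ, Metric.ball q r := by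
      ext p
      simp only [hWdef, Set.mem_setOf_eq, Set.not_subset, Set.mem_iUnion, Set.mem_compl_iff,
        Metric.mem_ball]
      constructor
      · rintro ⟨q, hq1, hq2⟩; exact ⟨q, hq2, by rwa [dist_comm]⟩
      · rintro ⟨q, hq2, hq1⟩; exact ⟨q, by rwa [dist_comm], hq2⟩
    rw [this]
    exact isOpen_biUnion fun q _ => Metric.isOpen_ball
  set S : ℕ → Set (ℝ × ℝ) := fun n => A ∩ W (2/((n:ℝ)+1)) with hSdef
  have hSmeas : ∀ n, MeasurableSet (S n) := fun n => hAmeas.inter (hWopen _).measurableSet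
  have hSanti : Antitone S := by
    intro n m hnm
    refine Set.inter_subset_inter_right _ fun p hp => ?_
    simp only [hWdef, Set.mem_setOf_eq] at hp ⊢
    intro hsub
    have hle2 : (2:ℝ)/((m:ℝ)+1) ≤ 2/((n:ℝ)+1) := by
      rw [div_le_div_iff₀ (by positivity) (by positivity)]
      have : (n:ℝ) ≤ (m:ℝ) := by exact_mod_cast hnm
      nlinarith
    exact hp ((Metric.ball_subset_ball hle2).trans hsub)
  have hSinter : ⋂ n, S n = ∅ := by
    rw [Set.eq_empty_iff_forall_notMem]
    intro p hp
    have hpA : p ∈ A := (Set.mem_iInter.1 hp 0).1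
    obtain ⟨r, hr, hball⟩ := Metric.isOpen_iff.1 hUopen p (hAsubU hpA)
    obtain ⟨n, hn⟩ := exists_nat_gt (2/r)
    have hn' : 2/((n:ℝ)+1) < r := by
      rw [div_lt_iff₀ (by positivity)]
      have hlt : (2:ℝ)/r < (n:ℝ)+1 := by linarith
      have := (div_lt_iff₀ hr).1 hlt
      linarith [mul_comm r ((n:ℝ)+1)]
    exact (Set.mem_iInter.1 hp n).2 ((Metric.ball_subset_ball hn'.le).trans hball)
  have hStend : Filter.Tendsto (fun n => volume (S n)) Filter.atTop (nhds 0) := by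
    have h := tendsto_measure_iInter_atTop (μ := volume) (s := S)
      (fun n => (hSmeas n).nullMeasurableSet) hSanti
      ⟨0, ((measure_mono (hAQ.trans' Set.inter_subset_left)).trans_lt hQfin).ne⟩
    rw [hSinter, measure_empty] at h
    exact h
  have hev : ∀ᶠ n in Filter.atTop, volume (S n) < ENNReal.ofReal ε₁ :=
    hStend.eventually_lt_const (by simp [hε₁])
  obtain ⟨n₁, hn₁⟩ := Filter.eventually_atTop.1 hev
  -- measure of Q \ A
  have hQA : volume (Q \ A) ≤ ENNReal.ofReal ε₁ := by
    have hm : MeasurableSet (Q \ A) := hQmeas.diff hAmeas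
    calc volume (Q \ A) = ∫⁻ u, volume (Prod.mk u ⁻¹' (Q \ A)) := by
          rw [Measure.volume_eq_prod, Measure.prod_apply hm]
      _ ≤ ∫⁻ u, (Set.Icc (0:ℝ) 1).indicator (fun _ => ENNReal.ofReal ε₁) u := by
          refine lintegral_mono fun u => ?_
          by_cases hu : u ∈ Set.Icc (0:ℝ) 1
          · rw [Set.indicator_of_mem hu]
            refine le_trans (measure_mono ?_) (hsec u hu)
            intro v hv
            exact ⟨(Set.mem_prod.1 hv.1).2, hv.2⟩
          · have : Prod.mk u ⁻¹' (Q \ A) = ∅ := by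
              rw [Set.eq_empty_iff_forall_notMem]
              intro v hv
              exact hu (Set.mem_prod.1 hv.1).1
            rw [this, measure_empty]
            exact zero_le
      _ = ENNReal.ofReal ε₁ := by
          rw [lintegral_indicator measurableSet_Icc, setLIntegral_const, Real.volume_Icc]
          norm_num
  -- choose N₀
  obtain ⟨N₀δ, hN₀δ⟩ := exists_nat_gt (2/δ)
  refine ⟨max (n₁ + 1) (N₀δ + 1), fun N hN => ?_⟩
  have hNn₁ : n₁ + 1 ≤ N := le_trans (le_max_left _ _) hN
  have hNδ : N₀δ + 1 ≤ N := le_trans (le_max_right _ _) hN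
  have hN1 : 1 ≤ N := le_trans (Nat.le_add_left 1 n₁) hNn₁
  have hN0 : (0:ℝ) < N := by exact_mod_cast hN1
  have h2Nδ : (2:ℝ)/N < δ := by
    rw [div_lt_iff₀ hN0]
    have hNgt : (2:ℝ)/δ < N := by
      refine lt_of_lt_of_le hN₀δ ?_
      exact_mod_cast le_trans (Nat.le_succ _) hNδ
    have := (div_lt_iff₀ hδpos).1 hNgt
    linarith [mul_comm δ (N:ℝ)]
  obtain ⟨n, rfl⟩ : ∃ n, N = n + 1 := ⟨N - 1, by omega⟩
  have hncast : ((n:ℝ)+1) = ((n+1 : ℕ):ℝ) := by push_cast; ring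
  have hSn : volume (S n) < ENNReal.ofReal ε₁ := hn₁ n (by omega)
  -- good set
  set N' : ℕ := n + 1
  set good : Set (ℝ × ℝ) := Q \ W (2/(N':ℝ)) with hgood
  have hgoodmeas : MeasurableSet good := hQmeas.diff (hWopen _).measurableSet
  have hgoodQ : good ⊆ Q := Set.diff_subset
  -- pointwise bound on good
  have hptwise : ∀ p ∈ good, g N' p ≤ ε₁ := by
    rintro ⟨u, v⟩ ⟨hpQ, hpW⟩
    simp only [hWdef, Set.mem_setOf_eq, not_not] at hpW
    obtain ⟨hu, hv⟩ := Set.mem_prod.1 hpQ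
    obtain ⟨huN, hduN⟩ := floor_aux (N := N') le_add_self hu
    obtain ⟨hvN, hdvN⟩ := floor_aux (N := N') le_add_self hv
    set pN : ℝ × ℝ := ((⌊(N':ℝ)*u⌋:ℝ)/N', (⌊(N':ℝ)*v⌋:ℝ)/N') with hpN
    have hdist : dist pN (u, v) ≤ 1/(N':ℝ) := by
      rw [Prod.dist_eq]
      exact max_le hduN hdvN
    have h1N2N : (1:ℝ)/N' < 2/N' := by
      have : (0:ℝ) < N' := by exact_mod_cast Nat.succ_pos n
      rw [div_lt_div_iff₀ this this]
      nlinarith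
    have hpNU : pN ∈ U := hpW (Metric.mem_ball.2 (lt_of_le_of_lt hdist h1N2N))
    have hpU : (u, v) ∈ U := hpW (Metric.mem_ball_self (by positivity))
    have hpNA : pN ∈ A := by rw [hAU]; exact ⟨hpNU, Set.mk_mem_prod huN hvN⟩
    have hpA : (u, v) ∈ A := by rw [hAU]; exact ⟨hpU, hpQ⟩
    have hdistδ : dist pN (u, v) < δ := lt_of_le_of_lt hdist (h1N2N.trans h2Nδ)
    have := hδ pN hpNA (u, v) hpA hdistδ
    rw [Real.dist_eq] at this
    exact this.le
  -- split integral
  have hsplit : ∫ p in Q, g N' p = (∫ p in good, g N' p) + ∫ p in Q \ good, g N' p := by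
    rw [← setIntegral_union (Set.disjoint_sdiff_right) (hQmeas.diff hgoodmeas)
      ((hgint N').mono_set hgoodQ) ((hgint N').mono_set Set.diff_subset),
      Set.union_diff_cancel hgoodQ]
  have hI1 : ∫ p in good, g N' p ≤ ε₁ * (volume good).toReal := by
    refine le_trans (le_abs_self _) ?_
    rw [← Real.norm_eq_abs]
    refine norm_setIntegral_le_of_norm_le_const ((measure_mono hgoodQ).trans_lt hQfin)
      (fun p hp => ?_)
    rw [Real.norm_eq_abs, abs_abs]
    exact hptwise p hp
  have hI2 : ∫ p in Q \ good, g N' p ≤ (2*CK) * (volume (Q \ good)).toReal := by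
    refine le_trans (le_abs_self _) ?_
    rw [← Real.norm_eq_abs]
    refine norm_setIntegral_le_of_norm_le_const ((measure_mono Set.diff_subset).trans_lt hQfin)
      (fun p _ => ?_)
    rw [Real.norm_eq_abs, abs_abs]
    exact hgbound N' p
  -- measure bounds
  have hgood1 : (volume good).toReal ≤ 1 := by
    have : volume good ≤ volume Q := measure_mono hgoodQ
    rw [hQvol] at this
    simpa using ENNReal.toReal_mono ENNReal.one_ne_top this
  have hbadsub : Q \ good ⊆ (Q \ A) ∪ S n := by
    rintro p ⟨hpQ, hpg⟩
    have hpW : p ∈ W (2/(N':ℝ)) := by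
      by_contra h
      exact hpg ⟨hpQ, h⟩
    by_cases hpA : p ∈ A
    · right
      refine ⟨hpA, ?_⟩
      have h22 : (2:ℝ)/((n:ℝ)+1) = 2/(N':ℝ) := by rw [hncast]
      show p ∈ W (2/((n:ℝ)+1))
      rw [h22]
      exact hpW
    · exact Or.inl ⟨hpQ, hpA⟩
  have hbad : (volume (Q \ good)).toReal ≤ 2 * ε₁ := by
    refine ENNReal.toReal_le_of_le_ofReal (by positivity) ?_
    calc volume (Q \ good) ≤ volume ((Q \ A) ∪ S n) := measure_mono hbadsub
      _ ≤ volume (Q \ A) + volume (S n) := measure_union_le _ _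
      _ ≤ ENNReal.ofReal ε₁ + ENNReal.ofReal ε₁ := add_le_add hQA hSn.le
      _ = ENNReal.ofReal (2*ε₁) := by rw [← ENNReal.ofReal_add hε₁.le hε₁.le]; ring_nf
  -- conclude
  have hgoodnn : (0:ℝ) ≤ (volume good).toReal := ENNReal.toReal_nonneg
  have hlt : ε₁ * (1 + 4*CK) < ε := by
    have hne : (4*(2*CK+1)) ≠ 0 := by positivity
    have h1 : ε₁ * (4*(2*CK+1)) = ε := by
      rw [hε₁def]; exact div_mul_cancel₀ ε hne
    nlinarith [mul_nonneg hε₁.le hCK, h1, hε₁]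
  have hFbound : ∫ p in Q, g N' p ≤ ε₁ + 2*CK * (2*ε₁) := by
    rw [hsplit]
    have e1 : ε₁ * (volume good).toReal ≤ ε₁ * 1 := by
      exact mul_le_mul_of_nonneg_left hgood1 hε₁.le
    have e2 : (2*CK) * (volume (Q \ good)).toReal ≤ (2*CK) * (2*ε₁) := by
      exact mul_le_mul_of_nonneg_left hbad (by linarith)
    linarith
  have hlt' : ε₁ + 2*CK*(2*ε₁) < ε := by nlinarith [hlt]
  have hgoal : ∫ p in Q, g N' p < ε := lt_of_le_of_lt hFbound hlt'
  simp only [Real.dist_eq, sub_zero]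
  rw [hiter N', abs_of_nonneg (hFnonneg N')]
  exact hgoal
end

section
/- Let 𝒰 be a compact metric space, μ ∈ P(𝒰), Σ finite, f : Σ×Σ → ℝ bounded, and K : 𝒰×𝒰 → ℝ bounded such that for every ε > 0 there is an open A_ε ⊆ 𝒰×𝒰 on which K is uniformly continuous and with μ({v : (u,v) ∉ A_ε}) ≤ ε for all u. Then the function F(x,m,u) = ∫_{𝒰×Σ} K(u,v) f(x,y) m(dv,dy) is jointly continuous on 𝒫_μ × 𝒰, where 𝒫_μ is the set of probability measures on 𝒰×Σ with 𝒰-marginal μ, endowed with the weak topology. -/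
open MeasureTheory Set Filter Topology

set_option linter.unusedSectionVars false

section Aux

variable {U : Type*} [MetricSpace U] [CompactSpace U] [MeasurableSpace U] [BorelSpace U]
variable {S : Type*} [Fintype S] [TopologicalSpace S] [DiscreteTopology S]
  [MeasurableSpace S] [BorelSpace S]

private lemma aux_integrable (m : Measure (U × S)) [IsProbabilityMeasure m]
    (g : U × S → ℝ) (hg : Measurable g) (C : ℝ) (hC : ∀ p, |g p| ≤ C) :
    Integrable g m :=
  (integrable_const C).mono' hg.aestronglyMeasurable
    (Filter.Eventually.of_forall (by simpa [Real.norm_eq_abs] using hC))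

private lemma aux_ind (μ : Measure U) (m : Measure (U × S)) [IsProbabilityMeasure m]
    (hm : m.map Prod.fst = μ) (B : Set U) (hB : MeasurableSet B) (d : ℝ) :
    ∫ p : U × S, B.indicator (fun _ => d) p.1 ∂m = (μ B).toReal * d := by
  have h1 : ∫ p : U × S, B.indicator (fun _ => d) p.1 ∂m
      = ∫ v, B.indicator (fun _ => d) v ∂(m.map Prod.fst) := by
    rw [integral_map measurable_fst.aemeasurable
      (measurable_const.indicator hB).aestronglyMeasurable]
  rw [h1, hm, integral_indicator_const d hB, smul_eq_mul]
  rfl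

private lemma aux_diff (μ : Measure U) (m : Measure (U × S)) [IsProbabilityMeasure m]
    (hm : m.map Prod.fst = μ)
    (g₁ g₂ : U × S → ℝ) (h₁ : Integrable g₁ m) (h₂ : Integrable g₂ m)
    (c d : ℝ) (hc : 0 ≤ c) (hd : 0 ≤ d) (B : Set U) (hB : MeasurableSet B)
    (hbound : ∀ p : U × S, |g₁ p - g₂ p| ≤ c + B.indicator (fun _ => d) p.1) :
    |∫ p, g₁ p ∂m - ∫ p, g₂ p ∂m| ≤ c + (μ B).toReal * d := by
  have hindb : ∀ v, |B.indicator (fun _ => d) v| ≤ d := fun v => by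
    by_cases h : v ∈ B <;> simp [h, abs_of_nonneg hd, hd]
  have hbint : Integrable (fun p : U × S => c + B.indicator (fun _ => d) p.1) m := by
    refine aux_integrable m _ ?_ (|c| + d) ?_
    · exact measurable_const.add ((measurable_const.indicator hB).comp measurable_fst)
    · intro p
      exact (abs_add_le _ _).trans (add_le_add le_rfl (hindb p.1))
  rw [← integral_sub h₁ h₂]
  calc |∫ p, (g₁ p - g₂ p) ∂m| ≤ ∫ p, |g₁ p - g₂ p| ∂m := by
        simpa [Real.norm_eq_abs] using
          norm_integral_le_integral_norm (μ := m) (fun p => g₁ p - g₂ p)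
    _ ≤ ∫ p, (c + B.indicator (fun _ => d) p.1) ∂m :=
        integral_mono (h₁.sub h₂).abs hbint hbound
    _ = c + (μ B).toReal * d := by
        have hind_int : Integrable (fun p : U × S => B.indicator (fun _ => d) p.1) m :=
          aux_integrable m _ ((measurable_const.indicator hB).comp measurable_fst) d
            (fun p => hindb p.1)
        rw [integral_add (integrable_const c) hind_int, integral_const, aux_ind μ m hm B hB d]
        simp

end Aux

theorem stmt10 {U : Type*} [MetricSpace U] [CompactSpace U] [MeasurableSpace U] [BorelSpace U]
    {S : Type*} [Fintype S] [TopologicalSpace S] [DiscreteTopology S]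
    [MeasurableSpace S] [BorelSpace S]
    (μ : Measure U) [IsProbabilityMeasure μ]
    (K : U → U → ℝ) (f : S → S → ℝ) (CK Cf : ℝ)
    (hKb : ∀ u v, |K u v| ≤ CK) (hfb : ∀ x y, |f x y| ≤ Cf)
    (hKmeas : Measurable fun p : U × U => K p.1 p.2)
    (hcond : ∀ ε > (0 : ℝ), ∃ A : Set (U × U), IsOpen A ∧
      UniformContinuousOn (fun p : U × U => K p.1 p.2) A ∧
      ∀ u : U, μ {v | (u, v) ∉ A} ≤ ENNReal.ofReal ε)
    (x : S) :
    ContinuousOn (fun q : ProbabilityMeasure (U × S) × U =>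
        ∫ p, K q.2 p.1 * f x p.2 ∂(q.1 : Measure (U × S)))
      ({m : ProbabilityMeasure (U × S) | (m : Measure (U × S)).map Prod.fst = μ}
        ×ˢ (Set.univ : Set U)) := by
  -- basic positivity facts
  have hUne : Nonempty U := by
    by_contra h
    have h1 : μ Set.univ = 1 := measure_univ
    rw [Set.univ_eq_empty_iff.mpr (not_nonempty_iff.mp h), measure_empty] at h1
    exact zero_ne_one h1
  obtain ⟨u1⟩ := hUne
  have hCK : 0 ≤ CK := (abs_nonneg _).trans (hKb u1 u1)
  have hCf : 0 ≤ Cf := (abs_nonneg _).trans (hfb x x)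
  -- measurability and integrability of the integrands
  have hgmeas : ∀ u : U, Measurable (fun p : U × S => K u p.1 * f x p.2) := fun u =>
    (hKmeas.comp (measurable_const.prodMk measurable_fst)).mul
      ((measurable_of_countable (f x)).comp measurable_snd)
  have hgbd : ∀ (u : U) (p : U × S), |K u p.1 * f x p.2| ≤ CK * Cf := fun u p => by
    rw [abs_mul]
    exact mul_le_mul (hKb _ _) (hfb _ _) (abs_nonneg _) hCK
  intro q hq
  obtain ⟨m₀, u₀⟩ := q
  have hm₀ : (m₀ : Measure (U × S)).map Prod.fst = μ := hq.1
  rw [ContinuousWithinAt, Metric.tendsto_nhds]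
  intro ε hε
  set D : ℝ := 1 + Cf + 12 * CK * Cf with hD
  have hDpos : 0 < D := by positivity
  set ε' : ℝ := ε / (2 * D) with hε'def
  have hε' : 0 < ε' := by positivity
  obtain ⟨A, hAopen, hAuc, hAμ⟩ := hcond ε' hε'
  obtain ⟨δ, hδpos, hδ⟩ := Metric.uniformContinuousOn_iff.mp hAuc ε' hε'
  -- the section of A over u₀, and a compact subset
  set T : Set U := {v | (u₀, v) ∈ A} with hTdef
  have hTopen : IsOpen T := hAopen.preimage (Continuous.prodMk_right u₀)
  have hTc : μ Tᶜ ≤ ENNReal.ofReal ε' := hAμ u₀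
  obtain ⟨C, hCT, hCcomp, hCμ⟩ := hTopen.measurableSet.exists_isCompact_diff_lt
    (measure_ne_top μ T) (ENNReal.ofReal_pos.mpr hε').ne'
  -- continuity of K u₀ on C
  have hKcont : ContinuousOn (fun v => K u₀ v) C := by
    intro v hv
    rw [Metric.continuousWithinAt_iff]
    intro e he
    obtain ⟨d, hd, hdd⟩ := Metric.uniformContinuousOn_iff.mp hAuc e he
    refine ⟨d, hd, fun {w} hw hwv => ?_⟩
    refine hdd (u₀, w) (hCT hw) (u₀, v) (hCT hv) ?_
    rw [Prod.dist_eq]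
    simp only [dist_self]
    rw [max_eq_right dist_nonneg]
    exact hwv
  -- Tietze extension and clamping
  obtain ⟨h, hrestrict⟩ := ContinuousMap.exists_restrict_eq (Y := ℝ) hCcomp.isClosed
    ⟨C.restrict (fun v => K u₀ v), continuousOn_iff_continuous_restrict.mp hKcont⟩
  set h' : U → ℝ := fun v => max (-CK) (min CK (h v)) with hh'def
  have hh'cont : Continuous h' := continuous_const.max (continuous_const.min h.continuous)
  have hh'b : ∀ v, |h' v| ≤ CK := fun v => by
    rw [abs_le]
    constructor
    · exact le_max_left _ _
    · exact max_le (by linarith) (min_le_left _ _)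
  have hh'eq : ∀ v ∈ C, h' v = K u₀ v := by
    intro v hv
    have h1 : h v = K u₀ v := by
      have := DFunLike.congr_fun hrestrict (⟨v, hv⟩ : C)
      exact this
    obtain ⟨hl, hr⟩ := abs_le.mp (hKb u₀ v)
    rw [hh'def]
    simp only [h1]
    rw [min_eq_right hr, max_eq_right hl]
  -- the bounded continuous comparison function
  set g : BoundedContinuousFunction (U × S) ℝ := BoundedContinuousFunction.ofNormedAddCommGroup
    (fun p => h' p.1 * f x p.2)
    ((hh'cont.comp continuous_fst).mul ((continuous_of_discreteTopology).comp continuous_snd))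
    (CK * Cf) (fun p => by
      rw [Real.norm_eq_abs, abs_mul]
      exact mul_le_mul (hh'b _) (hfb _ _) (abs_nonneg _) hCK) with hgdef
  have hgapp : ∀ p : U × S, g p = h' p.1 * f x p.2 := fun p => rfl
  have hgcont := ProbabilityMeasure.continuous_integral_boundedContinuousFunction g
  -- eventual closeness
  have hV : ∀ᶠ m' : ProbabilityMeasure (U × S) in 𝓝 m₀,
      dist (∫ p, g p ∂(m' : Measure (U × S))) (∫ p, g p ∂(m₀ : Measure (U × S))) < ε' :=
    Metric.tendsto_nhds.mp (hgcont.tendsto m₀) ε' hε'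
  have hball : ∀ᶠ u' : U in 𝓝 u₀, dist u' u₀ < δ := Metric.ball_mem_nhds u₀ hδpos
  have hev : ∀ᶠ q' : ProbabilityMeasure (U × S) × U in 𝓝 (m₀, u₀),
      dist (∫ p, g p ∂(q'.1 : Measure (U × S))) (∫ p, g p ∂(m₀ : Measure (U × S))) < ε'
        ∧ dist q'.2 u₀ < δ := by
    rw [nhds_prod_eq]
    exact hV.prod_mk hball
  filter_upwards [nhdsWithin_le_nhds hev, self_mem_nhdsWithin] with q' hq' hq's
  obtain ⟨m, u⟩ := q'
  obtain ⟨hVm, hu⟩ := hq'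
  have hm : (m : Measure (U × S)).map Prod.fst = μ := hq's.1
  -- bad set for the u-estimate
  set B1 : Set U := {v | (u, v) ∉ A} ∪ {v | (u₀, v) ∉ A} with hB1def
  have hB1meas : MeasurableSet B1 := by
    refine MeasurableSet.union ?_ ?_
    · exact (hAopen.preimage (Continuous.prodMk_right u)).measurableSet.compl
    · exact (hAopen.preimage (Continuous.prodMk_right u₀)).measurableSet.compl
  have hB1μ : (μ B1).toReal ≤ 2 * ε' := by
    have h1 : μ B1 ≤ ENNReal.ofReal ε' + ENNReal.ofReal ε' :=
      (measure_union_le _ _).trans (add_le_add (hAμ u) (hAμ u₀))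
    rw [← ENNReal.ofReal_add hε'.le hε'.le] at h1
    have := ENNReal.toReal_le_of_le_ofReal (by linarith) h1
    linarith
  -- bad set for the Tietze estimate
  have hCcμ : (μ Cᶜ).toReal ≤ 2 * ε' := by
    have hsub : Cᶜ ⊆ Tᶜ ∪ (T \ C) := by
      intro v hv
      by_cases hvT : v ∈ T
      · exact Or.inr ⟨hvT, hv⟩
      · exact Or.inl hvT
    have h1 : μ Cᶜ ≤ ENNReal.ofReal ε' + ENNReal.ofReal ε' :=
      ((measure_mono hsub).trans (measure_union_le _ _)).trans
        (add_le_add hTc hCμ.le)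
    rw [← ENNReal.ofReal_add hε'.le hε'.le] at h1
    have := ENNReal.toReal_le_of_le_ofReal (by linarith) h1
    linarith
  have hCcmeas : MeasurableSet Cᶜ := hCcomp.isClosed.measurableSet.compl
  -- integrability
  have hint : ∀ (u' : U) (m' : Measure (U × S)) [IsProbabilityMeasure m'],
      Integrable (fun p : U × S => K u' p.1 * f x p.2) m' := fun u' m' _ =>
    aux_integrable m' _ (hgmeas u') (CK * Cf) (hgbd u')
  have hgint : ∀ (m' : Measure (U × S)) [IsProbabilityMeasure m'],
      Integrable (fun p : U × S => g p) m' := fun m' _ =>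
    aux_integrable m' _ ((hh'cont.comp continuous_fst).mul
      ((continuous_of_discreteTopology).comp continuous_snd)).measurable (CK * Cf)
      (fun p => by
        rw [hgapp, abs_mul]
        exact mul_le_mul (hh'b _) (hfb _ _) (abs_nonneg _) hCK)
  -- estimate 1 : change u to u₀ under m
  have hest1 : |(∫ p, K u p.1 * f x p.2 ∂(m : Measure (U × S)))
      - ∫ p, K u₀ p.1 * f x p.2 ∂(m : Measure (U × S))| ≤ Cf * ε' + (μ B1).toReal * (2 * CK * Cf) := by
    refine aux_diff μ _ hm _ _ (hint u _) (hint u₀ _) (Cf * ε') (2 * CK * Cf)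
      (by positivity) (by positivity) B1 hB1meas ?_
    intro p
    rw [← sub_mul, abs_mul]
    by_cases hp : p.1 ∈ B1
    · rw [Set.indicator_of_mem hp]
      have : |K u p.1 - K u₀ p.1| ≤ 2 * CK :=
        (abs_sub _ _).trans (by linarith [hKb u p.1, hKb u₀ p.1])
      nlinarith [abs_nonneg (K u p.1 - K u₀ p.1), abs_nonneg (f x p.2), hfb x p.2]
    · rw [Set.indicator_of_notMem hp, add_zero]
      rw [hB1def] at hp
      simp only [Set.mem_union, Set.mem_setOf_eq, not_or, not_not] at hp
      have hdist : dist ((u, p.1) : U × U) ((u₀, p.1) : U × U) < δ := by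
        rw [Prod.dist_eq]
        simp only [dist_self]
        rw [max_eq_left dist_nonneg]
        exact hu
      have hKd : |K u p.1 - K u₀ p.1| ≤ ε' := by
        have := hδ (u, p.1) hp.1 (u₀, p.1) hp.2 hdist
        rw [Real.dist_eq] at this
        exact this.le
      calc |K u p.1 - K u₀ p.1| * |f x p.2| ≤ ε' * Cf :=
            mul_le_mul hKd (hfb _ _) (abs_nonneg _) hε'.le
        _ = Cf * ε' := mul_comm _ _
  -- estimate 2/4 : replace K u₀ by h' under any marginal-μ measure
  have hest2 : ∀ (m' : Measure (U × S)) [IsProbabilityMeasure m'],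
      m'.map Prod.fst = μ →
      |(∫ p, K u₀ p.1 * f x p.2 ∂m') - ∫ p, g p ∂m'| ≤ 0 + (μ Cᶜ).toReal * (2 * CK * Cf) := by
    intro m' _ hm'
    refine aux_diff μ _ hm' _ _ (hint u₀ _) (hgint _) 0 (2 * CK * Cf)
      le_rfl (by positivity) Cᶜ hCcmeas ?_
    intro p
    rw [hgapp, ← sub_mul, abs_mul]
    by_cases hp : p.1 ∈ Cᶜ
    · rw [Set.indicator_of_mem hp, zero_add]
      have : |K u₀ p.1 - h' p.1| ≤ 2 * CK :=
        (abs_sub _ _).trans (by linarith [hKb u₀ p.1, hh'b p.1])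
      nlinarith [abs_nonneg (K u₀ p.1 - h' p.1), abs_nonneg (f x p.2), hfb x p.2]
    · rw [Set.indicator_of_notMem hp, add_zero]
      have hpc : p.1 ∈ C := not_not.mp hp
      rw [hh'eq p.1 hpc]
      simp
  -- combine
  rw [Real.dist_eq]
  have hVm' : |(∫ p, g p ∂(m : Measure (U × S))) - ∫ p, g p ∂(m₀ : Measure (U × S))| < ε' := by
    rw [← Real.dist_eq]; exact hVm
  have e2 := hest2 (m : Measure (U × S)) hm
  have e4 := hest2 (m₀ : Measure (U × S)) hm₀
  have key : |(∫ p, K u p.1 * f x p.2 ∂(m : Measure (U × S)))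
      - ∫ p, K u₀ p.1 * f x p.2 ∂(m₀ : Measure (U × S))|
      ≤ (Cf * ε' + (μ B1).toReal * (2 * CK * Cf))
        + (0 + (μ Cᶜ).toReal * (2 * CK * Cf)) + ε'
        + (0 + (μ Cᶜ).toReal * (2 * CK * Cf)) := by
    have tri : ∀ a b c d e : ℝ, |a - e| ≤ |a - b| + |b - c| + |c - d| + |d - e| := by
      intro a b c d e
      have h1 : a - e = (a - b) + (b - c) + (c - d) + (d - e) := by ring
      rw [h1]
      calc |(a - b) + (b - c) + (c - d) + (d - e)|
          ≤ |(a - b) + (b - c) + (c - d)| + |d - e| := abs_add_le _ _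
        _ ≤ (|(a - b) + (b - c)| + |c - d|) + |d - e| := by linarith [abs_add_le ((a-b)+(b-c)) (c-d)]
        _ ≤ ((|a - b| + |b - c|) + |c - d|) + |d - e| := by linarith [abs_add_le (a-b) (b-c)]
    refine (tri _ (∫ p, K u₀ p.1 * f x p.2 ∂(m : Measure (U × S)))
      (∫ p, g p ∂(m : Measure (U × S))) (∫ p, g p ∂(m₀ : Measure (U × S))) _).trans ?_
    have e4' : |(∫ p, g p ∂(m₀ : Measure (U × S)))
        - ∫ p, K u₀ p.1 * f x p.2 ∂(m₀ : Measure (U × S))|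
        ≤ 0 + (μ Cᶜ).toReal * (2 * CK * Cf) := by
      rw [abs_sub_comm]; exact e4
    linarith [hest1, e2, hVm'.le, e4']
  have hfinal : (Cf * ε' + (μ B1).toReal * (2 * CK * Cf))
        + (0 + (μ Cᶜ).toReal * (2 * CK * Cf)) + ε'
        + (0 + (μ Cᶜ).toReal * (2 * CK * Cf)) ≤ D * ε' := by
    have hB1' := hB1μ
    have hCc' := hCcμ
    have hmul : (μ B1).toReal * (2 * CK * Cf) ≤ 2 * ε' * (2 * CK * Cf) :=
      mul_le_mul_of_nonneg_right hB1' (by positivity)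
    have hmul2 : (μ Cᶜ).toReal * (2 * CK * Cf) ≤ 2 * ε' * (2 * CK * Cf) :=
      mul_le_mul_of_nonneg_right hCc' (by positivity)
    rw [hD]
    nlinarith [hε'.le]
  have hDε : D * ε' = ε / 2 := by
    rw [hε'def]
    field_simp
  calc |(∫ p, K u p.1 * f x p.2 ∂(m : Measure (U × S)))
      - ∫ p, K u₀ p.1 * f x p.2 ∂(m₀ : Measure (U × S))| ≤ D * ε' := key.trans hfinal
    _ = ε / 2 := hDε
    _ < ε := by linarith
end

section
/- Under the hypotheses of the previous continuity lemma (K, f bounded, K uniformly continuous off a μ-small closed set uniformly in u, 𝒰 compact metric), if m_n ∈ P(𝒰×Σ) converge weakly to m ∈ 𝒫_μ, then F(x,m_n,u) → F(x,m,u) uniformly in u ∈ 𝒰, where F(x,m,u) = ∫ K(u,v) f(x,y) m(dv,dy). -/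
open MeasureTheory Filter Metric Set

private lemma integrable_of_bdd {X : Type*} [MeasurableSpace X] {ν : Measure X}
    [IsProbabilityMeasure ν] {g : X → ℝ} (hm : AEStronglyMeasurable g ν) {C : ℝ}
    (hb : ∀ p, |g p| ≤ C) : Integrable g ν :=
  ⟨hm, HasFiniteIntegral.of_bounded (C := C) (ae_of_all _ (fun p => by simpa using hb p))⟩

private lemma dist_int_le {X : Type*} [TopologicalSpace X] [CompactSpace X]
    [MeasurableSpace X] [OpensMeasurableSpace X] (ν : Measure X) [IsProbabilityMeasure ν]
    (φ φ' : C(X, ℝ)) : dist (∫ p, φ p ∂ν) (∫ p, φ' p ∂ν) ≤ dist φ φ' := by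
  have i1 : Integrable (fun p => φ p) ν := by
    exact (BoundedContinuousFunction.mkOfCompact φ).integrable ν
  have i2 : Integrable (fun p => φ' p) ν := by
    exact (BoundedContinuousFunction.mkOfCompact φ').integrable ν
  rw [Real.dist_eq, ← integral_sub i1 i2]
  calc |∫ p, (φ p - φ' p) ∂ν| ≤ dist φ φ' * (ν Set.univ).toReal := by
        rw [← Real.norm_eq_abs]
        apply norm_integral_le_of_norm_le_const
        exact ae_of_all _ fun p => by
          simpa [Real.norm_eq_abs, Real.dist_eq] using φ.dist_apply_le_dist (g := φ') p
    _ = dist φ φ' := by simp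

private lemma cont_int_param {U X : Type*} [TopologicalSpace U] [TopologicalSpace X]
    [CompactSpace X] [MeasurableSpace X] [OpensMeasurableSpace X]
    (g : U × X → ℝ) (hg : Continuous g) (ν : Measure X) [IsProbabilityMeasure ν] :
    Continuous (fun u => ∫ p, g (u, p) ∂ν) := by
  have hG : Continuous fun u => (ContinuousMap.curry ⟨g, hg⟩) u := (ContinuousMap.curry ⟨g, hg⟩).continuous
  rw [continuous_iff_continuousAt]
  intro u₀
  rw [ContinuousAt, tendsto_iff_dist_tendsto_zero]
  apply squeeze_zero (fun u => dist_nonneg)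
    (g := fun u => dist ((ContinuousMap.curry ⟨g, hg⟩) u) ((ContinuousMap.curry ⟨g, hg⟩) u₀))
  · intro u
    simpa [ContinuousMap.curry_apply] using
      dist_int_le ν ((ContinuousMap.curry ⟨g, hg⟩) u) ((ContinuousMap.curry ⟨g, hg⟩) u₀)
  · have := (hG.tendsto u₀).dist (tendsto_const_nhds (x := (ContinuousMap.curry ⟨g, hg⟩) u₀))
    simpa using this



private lemma unifA {U X : Type*} [MetricSpace U] [CompactSpace U]
    [TopologicalSpace X] [CompactSpace X] [MeasurableSpace X] [OpensMeasurableSpace X]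
    (g : U × X → ℝ) (hg : Continuous g)
    (ν : ℕ → ProbabilityMeasure X) (ν₀ : ProbabilityMeasure X)
    (hconv : Tendsto ν atTop (nhds ν₀)) :
    TendstoUniformly (fun n u => ∫ p, g (u, p) ∂(ν n : Measure X))
      (fun u => ∫ p, g (u, p) ∂(ν₀ : Measure X)) atTop := by
  set G : C(U, C(X, ℝ)) := ContinuousMap.curry ⟨g, hg⟩ with hGdef
  have hGg : ∀ u p, G u p = g (u, p) := fun u p => rfl
  rw [Metric.tendstoUniformly_iff]
  intro ε hε
  -- uniform continuity of G
  have hUC : UniformContinuous fun u => G u :=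
    CompactSpace.uniformContinuous_of_continuous G.continuous
  rw [Metric.uniformContinuous_iff] at hUC
  obtain ⟨δ, hδ, hδ'⟩ := hUC (ε / 3) (by linarith)
  -- finite subcover
  have hcov : (Set.univ : Set U) ⊆ ⋃ u : U, Metric.ball u δ := by
    intro u _; exact Set.mem_iUnion.mpr ⟨u, Metric.mem_ball_self hδ⟩
  obtain ⟨t, ht⟩ := isCompact_univ.elim_finite_subcover (fun u : U => Metric.ball u δ)
    (fun u => Metric.isOpen_ball) hcov
  -- pointwise convergence at centers
  have hpt : ∀ i : U, Tendsto (fun n => ∫ p, g (i, p) ∂(ν n : Measure X)) atTop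
      (nhds (∫ p, g (i, p) ∂(ν₀ : Measure X))) := by
    intro i
    have := MeasureTheory.ProbabilityMeasure.tendsto_iff_forall_integral_tendsto.mp hconv
      (BoundedContinuousFunction.mkOfCompact (G i))
    simpa [hGg] using this
  have hev : ∀ᶠ n in atTop, ∀ i ∈ t,
      dist (∫ p, g (i, p) ∂(ν₀ : Measure X)) (∫ p, g (i, p) ∂(ν n : Measure X)) < ε / 3 := by
    rw [Filter.eventually_all_finset]
    intro i _
    have := (hpt i).eventually (Metric.ball_mem_nhds _ (show (0:ℝ) < ε/3 by linarith))
    refine this.mono fun n hn => ?_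
    rw [dist_comm]; exact hn
  refine hev.mono fun n hn u => ?_
  obtain ⟨i, hit, hui⟩ : ∃ i ∈ t, u ∈ Metric.ball i δ := by
    have := ht (Set.mem_univ u)
    simpa using this
  have key : ∀ (ρ : Measure X) [IsProbabilityMeasure ρ],
      dist (∫ p, g (u, p) ∂ρ) (∫ p, g (i, p) ∂ρ) ≤ dist (G u) (G i) := by
    intro ρ _
    simpa [hGg] using dist_int_le ρ (G u) (G i)
  have hGd : dist (G u) (G i) < ε / 3 := hδ' (by rwa [Metric.mem_ball] at hui)
  calc dist (∫ p, g (u, p) ∂(ν₀ : Measure X)) (∫ p, g (u, p) ∂(ν n : Measure X))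
      ≤ dist (∫ p, g (u, p) ∂(ν₀ : Measure X)) (∫ p, g (i, p) ∂(ν₀ : Measure X))
        + dist (∫ p, g (i, p) ∂(ν₀ : Measure X)) (∫ p, g (i, p) ∂(ν n : Measure X))
        + dist (∫ p, g (i, p) ∂(ν n : Measure X)) (∫ p, g (u, p) ∂(ν n : Measure X)) :=
        dist_triangle4 _ _ _ _
    _ < ε / 3 + ε / 3 + ε / 3 := by
        have h1 := key (ν₀ : Measure X)
        have h3 := key (ν n : Measure X)
        rw [dist_comm (∫ p, g (i, p) ∂(ν n : Measure X))] at *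
        gcongr
        · exact lt_of_le_of_lt h1 hGd
        · exact hn i hit
        · exact lt_of_le_of_lt (key (ν n : Measure X)) hGd
    _ = ε := by ring



private lemma exists_cutoff {U : Type*} [MetricSpace U] [CompactSpace U] [MeasurableSpace U]
    [BorelSpace U] (μ : Measure U) [IsProbabilityMeasure μ]
    (A : Set (U × U)) (hA : IsOpen A) {ε : ℝ} (hε : 0 < ε)
    (hsmall : ∀ u : U, μ {v | (u, v) ∉ A} ≤ ENNReal.ofReal ε) :
    ∃ h : U × U → ℝ, Continuous h ∧ (∀ p, 0 ≤ h p) ∧ (∀ p, h p ≤ 1) ∧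
      (∀ p, p ∉ A → h p = 0) ∧ ∀ u : U, ∫ v, (1 - h (u, v)) ∂μ ≤ 2 * ε := by
  rcases Set.eq_empty_or_nonempty Aᶜ with hBe | hBne
  · refine ⟨fun _ => 1, continuous_const, fun p => zero_le_one, fun p => le_rfl, ?_, ?_⟩
    · intro p hp
      exact absurd (Set.eq_empty_iff_forall_notMem.mp hBe p) (by simpa using hp)
    · intro u; simp only [sub_self, integral_zero]; positivity
  set B := Aᶜ with hBdef
  have hBc : IsClosed B := hA.isClosed_compl
  set hk : ℕ → U × U → ℝ := fun k p => min 1 (infDist p B * (k + 1)) with hkdef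
  have hk_cont : ∀ k, Continuous (hk k) :=
    fun k => continuous_const.min ((continuous_infDist_pt B).mul continuous_const)
  have hk_nonneg : ∀ k p, 0 ≤ hk k p := fun k p =>
    le_min zero_le_one (mul_nonneg infDist_nonneg (by positivity))
  have hk_le_one : ∀ k p, hk k p ≤ 1 := fun k p => min_le_left _ _
  have hk_zero : ∀ k p, p ∈ B → hk k p = 0 := by
    intro k p hp
    simp [hkdef, infDist_zero_of_mem hp]
  have hk_mono : ∀ (k k' : ℕ), k ≤ k' → ∀ p, hk k p ≤ hk k' p := by
    intro k k' hkk p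
    refine min_le_min le_rfl (mul_le_mul_of_nonneg_left ?_ infDist_nonneg)
    have : (k : ℝ) ≤ k' := Nat.cast_le.mpr hkk
    linarith
  -- integrability
  have hint : ∀ k (u : U), Integrable (fun v => 1 - hk k (u, v)) μ := by
    intro k u
    refine integrable_of_bdd (C := 1)
      (Continuous.aestronglyMeasurable
        (continuous_const.sub ((hk_cont k).comp (Continuous.prodMk_right u)))) fun v => ?_
    rw [abs_le]
    constructor <;> [linarith [hk_le_one k (u, v)]; linarith [hk_nonneg k (u, v)]]
  set ψ : ℕ → U → ℝ := fun k u => ∫ v, (1 - hk k (u, v)) ∂μ with hψdef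
  have hψ_cont : ∀ k, Continuous (ψ k) := by
    intro k
    exact cont_int_param (fun q : U × U => 1 - hk k q) (continuous_const.sub (hk_cont k)) μ
  have hψ_anti : ∀ (k k' : ℕ), k ≤ k' → ∀ u, ψ k' u ≤ ψ k u := by
    intro k k' hkk u
    refine integral_mono (hint k' u) (hint k u) fun v => ?_
    have := hk_mono k k' hkk (u, v)
    simp only; linarith
  -- pointwise limit < 2ε
  have hψ_lim : ∀ u, ∀ᶠ k in atTop, ψ k u < 2 * ε := by
    intro u
    set sl : Set U := {v | (u, v) ∈ B} with hsl
    have hslm : MeasurableSet sl :=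
      (hBc.preimage (Continuous.prodMk_right u)).measurableSet
    have hT : Tendsto (fun k => ψ k u) atTop
        (nhds (∫ v, sl.indicator (fun _ => (1:ℝ)) v ∂μ)) := by
      refine tendsto_integral_of_dominated_convergence (fun _ => (1:ℝ))
        (fun k => (Continuous.aestronglyMeasurable
          (continuous_const.sub ((hk_cont k).comp (Continuous.prodMk_right u)))))
        (integrable_const 1) (fun k => ae_of_all _ fun v => ?_) (ae_of_all _ fun v => ?_)
      · have h1 := hk_le_one k (u, v); have h2 := hk_nonneg k (u, v)
        rw [Real.norm_eq_abs, abs_le]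
        exact ⟨by linarith, by linarith⟩
      · by_cases hv : (u, v) ∈ B
        · have : ∀ k, 1 - hk k (u, v) = 1 := fun k => by rw [hk_zero k _ hv]; ring
          simp only [this]
          have : sl.indicator (fun _ => (1:ℝ)) v = 1 := Set.indicator_of_mem (show v ∈ sl from hv) _
          rw [this]; exact tendsto_const_nhds
        · have hd : 0 < infDist (u, v) B := (hBc.notMem_iff_infDist_pos hBne).mp hv
          obtain ⟨k₀, hk₀⟩ := exists_nat_ge (1 / infDist (u, v) B)
          have hev : ∀ k ≥ k₀, 1 - hk k (u, v) = 0 := by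
            intro k hkk
            have h1 : (1:ℝ) ≤ infDist (u, v) B * (k + 1) := by
              rw [div_le_iff₀ hd] at hk₀
              have : (k₀ : ℝ) ≤ (k : ℝ) + 1 := by
                have : (k₀:ℝ) ≤ (k:ℝ) := Nat.cast_le.mpr hkk; linarith
              nlinarith
            simp [hkdef, min_eq_left h1]
          have : sl.indicator (fun _ => (1:ℝ)) v = 0 := Set.indicator_of_notMem (show v ∉ sl from hv) _
          rw [this]
          exact tendsto_atTop_of_eventually_const hev
    have hlt : ∫ v, sl.indicator (fun _ => (1:ℝ)) v ∂μ < 2 * ε := by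
      rw [integral_indicator_const (1:ℝ) hslm]
      have h1 : μ sl ≤ ENNReal.ofReal ε := by
        have : sl = {v | (u, v) ∉ A} := by ext v; simp [hsl, hBdef]
        rw [this]; exact hsmall u
      have := ENNReal.toReal_le_of_le_ofReal hε.le h1
      simp only [smul_eq_mul, mul_one, Measure.real]
      linarith
    exact hT.eventually_lt_const hlt
  -- Dini via compactness
  set V : ℕ → Set U := fun k => {u | ψ k u < 2 * ε} with hVdef
  have hVopen : ∀ k, IsOpen (V k) := fun k => isOpen_lt (hψ_cont k) continuous_const
  have hVcover : (Set.univ : Set U) ⊆ ⋃ k, V k := by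
    intro u _
    obtain ⟨k, hk'⟩ := (hψ_lim u).exists
    exact Set.mem_iUnion.mpr ⟨k, hk'⟩
  obtain ⟨t, ht⟩ := isCompact_univ.elim_finite_subcover V hVopen hVcover
  set N := t.sup id with hNdef
  refine ⟨hk N, hk_cont N, hk_nonneg N, hk_le_one N, fun p hp => hk_zero N p hp, fun u => ?_⟩
  obtain ⟨k, hkt, hku⟩ : ∃ k ∈ t, u ∈ V k := by simpa using ht (Set.mem_univ u)
  have hkN : k ≤ N := Finset.le_sup (f := id) hkt
  exact le_of_lt (lt_of_le_of_lt (hψ_anti k N hkN u) hku)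


private lemma ktil_cont {U : Type*} [MetricSpace U] (K : U → U → ℝ) {CK : ℝ}
    (hKb : ∀ u v, |K u v| ≤ CK) {A : Set (U × U)} (hA : IsOpen A)
    (hKc : ContinuousOn (fun p : U × U => K p.1 p.2) A)
    {h : U × U → ℝ} (hc : Continuous h) (h0 : ∀ p, 0 ≤ h p) (hz : ∀ p, p ∉ A → h p = 0) :
    Continuous fun p : U × U => K p.1 p.2 * h p := by
  rw [continuous_iff_continuousAt]
  intro p
  by_cases hp : p ∈ A
  · exact (hKc.continuousAt (hA.mem_nhds hp)).mul hc.continuousAt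
  · have hKt : K p.1 p.2 * h p = 0 := by rw [hz p hp]; ring
    rw [ContinuousAt, hKt]
    have hCKh : Tendsto (fun q : U × U => CK * h q) (nhds p) (nhds 0) := by
      have h0' : CK * h p = 0 := by rw [hz p hp]; ring
      have := ((continuous_const.mul hc : Continuous fun q : U × U => CK * h q)).continuousAt (x := p)
      have e : ((fun _ : U × U => CK) * h) p = 0 := h0'
      rw [ContinuousAt, e] at this
      exact this
    have hneg : Tendsto (fun q : U × U => -(CK * h q)) (nhds p) (nhds 0) := by
      simpa using hCKh.neg
    have key : ∀ q : U × U, |K q.1 q.2 * h q| ≤ CK * h q := fun q => by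
      rw [abs_mul, abs_of_nonneg (h0 q)]
      exact mul_le_mul_of_nonneg_right (hKb q.1 q.2) (h0 q)
    exact tendsto_of_tendsto_of_tendsto_of_le_of_le hneg hCKh
      (fun q => (abs_le.mp (key q)).1) (fun q => (abs_le.mp (key q)).2)


theorem stmt11 {U : Type*} [MetricSpace U] [CompactSpace U] [MeasurableSpace U] [BorelSpace U]
    {S : Type*} [Fintype S] [TopologicalSpace S] [DiscreteTopology S]
    [MeasurableSpace S] [BorelSpace S]
    (μ : Measure U) [IsProbabilityMeasure μ]
    (K : U → U → ℝ) (f : S → S → ℝ) (CK Cf : ℝ)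
    (hKb : ∀ u v, |K u v| ≤ CK) (hfb : ∀ x y, |f x y| ≤ Cf)
    (hKmeas : Measurable fun p : U × U => K p.1 p.2)
    (hcond : ∀ ε > (0 : ℝ), ∃ A : Set (U × U), IsOpen A ∧
      UniformContinuousOn (fun p : U × U => K p.1 p.2) A ∧
      ∀ u : U, μ {v | (u, v) ∉ A} ≤ ENNReal.ofReal ε)
    (mseq : ℕ → ProbabilityMeasure (U × S)) (m : ProbabilityMeasure (U × S))
    (hconv : Filter.Tendsto mseq Filter.atTop (nhds m))
    (hmarg : (m : Measure (U × S)).map Prod.fst = μ)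
    (x : S) :
    TendstoUniformly
      (fun n u => ∫ p, K u p.1 * f x p.2 ∂(mseq n : Measure (U × S)))
      (fun u => ∫ p, K u p.1 * f x p.2 ∂(m : Measure (U × S)))
      Filter.atTop := by
  classical
  -- nonemptiness
  have hne : Nonempty (U × S) := by
    by_contra hne
    rw [not_nonempty_iff] at hne
    have h1 : (m : Measure (U × S)) Set.univ = 1 := measure_univ
    rw [Set.univ_eq_empty_iff.mpr hne, measure_empty] at h1
    exact zero_ne_one h1
  obtain ⟨u₀, x₀⟩ := hne.some
  have hCK : 0 ≤ CK := le_trans (abs_nonneg _) (hKb u₀ u₀)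
  have hCf : 0 ≤ Cf := le_trans (abs_nonneg _) (hfb x x)
  rw [Metric.tendstoUniformly_iff]
  intro ε hε
  set ε' : ℝ := ε / (16 * (CK * Cf + 1)) with hε'def
  have hε' : 0 < ε' := by positivity
  obtain ⟨A, hA, hKuc, hsmall⟩ := hcond ε' hε'
  obtain ⟨h, hhc, hh0, hh1, hhz, hhint⟩ := exists_cutoff μ A hA hε' hsmall
  set Kt : U × U → ℝ := fun p => K p.1 p.2 * h p with hKtdef
  have hKtc : Continuous Kt := ktil_cont K hKb hA hKuc.continuousOn hhc hh0 hhz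
  set g1 : U × (U × S) → ℝ := fun q => Kt (q.1, q.2.1) * f x q.2.2 with hg1def
  have hg1c : Continuous g1 :=
    (hKtc.comp (continuous_fst.prodMk (continuous_fst.comp continuous_snd))).mul
      ((continuous_of_discreteTopology (f := f x)).comp (continuous_snd.comp continuous_snd))
  set g2 : U × (U × S) → ℝ := fun q => 1 - h (q.1, q.2.1) with hg2def
  have hg2c : Continuous g2 :=
    continuous_const.sub (hhc.comp (continuous_fst.prodMk (continuous_fst.comp continuous_snd)))
  have HA1 := unifA g1 hg1c mseq m hconv
  have HA2 := unifA g2 hg2c mseq m hconv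
  rw [Metric.tendstoUniformly_iff] at HA1 HA2
  have hev1 := HA1 (ε / 2) (by linarith)
  have hev2 := HA2 ε' hε'
  -- generic decomposition bound
  have main : ∀ (ν : Measure (U × S)), IsProbabilityMeasure ν → ∀ u : U,
      |∫ p, K u p.1 * f x p.2 ∂ν - ∫ p, g1 (u, p) ∂ν| ≤ CK * Cf * ∫ p, g2 (u, p) ∂ν := by
    intro ν hν u
    haveI := hν
    have mKu : Measurable fun p : U × S => K u p.1 :=
      hKmeas.comp ((measurable_const.prodMk measurable_fst) : Measurable fun p : U × S => (u, p.1))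
    have mf : Measurable fun p : U × S => f x p.2 :=
      (measurable_of_countable (f x)).comp measurable_snd
    have mh : Measurable fun p : U × S => h (u, p.1) :=
      (hhc.measurable).comp ((measurable_const.prodMk measurable_fst) :
        Measurable fun p : U × S => (u, p.1))
    have h01 : ∀ p : U × S, 0 ≤ 1 - h (u, p.1) ∧ 1 - h (u, p.1) ≤ 1 := fun p =>
      ⟨by linarith [hh1 (u, p.1)], by linarith [hh0 (u, p.1)]⟩
    have hKf_bd : ∀ p : U × S, |K u p.1 * f x p.2| ≤ CK * Cf := fun p => by
      rw [abs_mul]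
      exact mul_le_mul (hKb _ _) (hfb _ _) (abs_nonneg _) hCK
    have intA : Integrable (fun p : U × S => K u p.1 * f x p.2) ν :=
      integrable_of_bdd ((mKu.mul mf).aestronglyMeasurable) hKf_bd
    have intg1 : Integrable (fun p : U × S => g1 (u, p)) ν :=
      integrable_of_bdd (C := CK * Cf)
        ((hg1c.comp (Continuous.prodMk_right u)).aestronglyMeasurable) (fun p => by
          simp only [hg1def, hKtdef]
          have : |K u p.1 * h (u, p.1) * f x p.2| = |K u p.1 * f x p.2| * h (u, p.1) := by
            rw [abs_mul, abs_mul, abs_mul, abs_of_nonneg (hh0 (u, p.1))]; ring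
          rw [this]
          calc |K u p.1 * f x p.2| * h (u, p.1) ≤ (CK * Cf) * 1 :=
                mul_le_mul (hKf_bd p) (hh1 _) (hh0 _) (by positivity)
            _ = CK * Cf := mul_one _)
    have rem_bd : ∀ p : U × S, |K u p.1 * (1 - h (u, p.1)) * f x p.2|
        ≤ CK * Cf * (1 - h (u, p.1)) := fun p => by
      have e1 : |K u p.1 * (1 - h (u, p.1)) * f x p.2|
          = |K u p.1| * |f x p.2| * (1 - h (u, p.1)) := by
        rw [abs_mul, abs_mul, abs_of_nonneg (h01 p).1]; ring
      rw [e1]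
      exact mul_le_mul_of_nonneg_right
        (mul_le_mul (hKb _ _) (hfb _ _) (abs_nonneg _) hCK) (h01 p).1
    have intrem : Integrable (fun p : U × S => K u p.1 * (1 - h (u, p.1)) * f x p.2) ν :=
      integrable_of_bdd (C := CK * Cf) (((mKu.mul (measurable_const.sub mh)).mul
        mf).aestronglyMeasurable) (fun p => le_trans (rem_bd p) (by
          have := (h01 p).2; have := (h01 p).1; nlinarith [mul_nonneg hCK hCf]))
    have intg2 : Integrable (fun p : U × S => g2 (u, p)) ν :=
      integrable_of_bdd (C := 1) ((hg2c.comp (Continuous.prodMk_right u)).aestronglyMeasurable)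
        (fun p => by
          simp only [hg2def]
          rw [abs_of_nonneg (h01 p).1]; exact (h01 p).2)
    have hdecomp : ∫ p, K u p.1 * f x p.2 ∂ν - ∫ p, g1 (u, p) ∂ν
        = ∫ p, K u p.1 * (1 - h (u, p.1)) * f x p.2 ∂ν := by
      rw [← integral_sub intA intg1]
      congr 1
      funext p
      simp only [hg1def, hKtdef]
      ring
    rw [hdecomp]
    calc |∫ p, K u p.1 * (1 - h (u, p.1)) * f x p.2 ∂ν|
        ≤ ∫ p, |K u p.1 * (1 - h (u, p.1)) * f x p.2| ∂ν := by
          rw [← Real.norm_eq_abs]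
          exact norm_integral_le_integral_norm _
      _ ≤ ∫ p, CK * Cf * (1 - h (u, p.1)) ∂ν := integral_mono intrem.abs
          (by simpa [hg2def] using intg2.const_mul (CK * Cf)) rem_bd
      _ = CK * Cf * ∫ p, g2 (u, p) ∂ν := by
          rw [integral_const_mul]
  -- marginal bound for m
  have hIm : ∀ u : U, ∫ p, g2 (u, p) ∂(m : Measure (U × S)) ≤ 2 * ε' := by
    intro u
    have haesm : AEStronglyMeasurable (fun v : U => 1 - h (u, v))
        ((m : Measure (U × S)).map Prod.fst) :=
      (continuous_const.sub (hhc.comp (Continuous.prodMk_right u))).aestronglyMeasurable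
    have : ∫ p, g2 (u, p) ∂(m : Measure (U × S)) = ∫ v, (1 - h (u, v)) ∂μ := by
      rw [← hmarg, integral_map measurable_fst.aemeasurable haesm]
    rw [this]
    exact hhint u
  filter_upwards [hev1, hev2] with n h1n h2n u
  have h1u := h1n u
  have h2u := h2n u
  have hmainm := main (m : Measure (U × S)) inferInstance u
  have hmainn := main (mseq n : Measure (U × S)) inferInstance u
  rw [Real.dist_eq] at h1u h2u ⊢
  have hImn : ∫ p, g2 (u, p) ∂(mseq n : Measure (U × S)) ≤ 2 * ε' + ε' := by
    have := abs_le.mp (le_of_lt h2u)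
    linarith [hIm u]
  have hc0 : 0 ≤ CK * Cf := by positivity
  have habs : |∫ p, K u p.1 * f x p.2 ∂(m : Measure (U × S))
      - ∫ p, K u p.1 * f x p.2 ∂(mseq n : Measure (U × S))|
      ≤ CK * Cf * (2 * ε') + ε / 2 + CK * Cf * (2 * ε' + ε') := by
    have t1 := abs_le.mp hmainm
    have t2 := abs_le.mp hmainn
    have t3 := abs_le.mp (le_of_lt h1u)
    have b1 : CK * Cf * ∫ p, g2 (u, p) ∂(m : Measure (U × S)) ≤ CK * Cf * (2 * ε') :=
      mul_le_mul_of_nonneg_left (hIm u) hc0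
    have b2 : CK * Cf * ∫ p, g2 (u, p) ∂(mseq n : Measure (U × S))
        ≤ CK * Cf * (2 * ε' + ε') := mul_le_mul_of_nonneg_left hImn hc0
    rw [abs_le]
    constructor <;> linarith
  have hkey : 16 * (CK * Cf + 1) * ε' = ε := by
    rw [hε'def]; field_simp
  calc |∫ p, K u p.1 * f x p.2 ∂(m : Measure (U × S))
      - ∫ p, K u p.1 * f x p.2 ∂(mseq n : Measure (U × S))|
      ≤ CK * Cf * (2 * ε') + ε / 2 + CK * Cf * (2 * ε' + ε') := habs
    _ < ε := by nlinarith [mul_nonneg hc0 hε'.le, hε']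
end
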